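/- Execution decomposition for uninitialized single-register protocols: any abstract execution a0 →* a with a0 initial can be decomposed as a0 →* (S, b) →* a, where S is the set of all states appearing (populated at some point) in the original execution and b is the register content of a. -/

import Mathlib

/-- Actions of a roundless register protocol: read or write a symbol of `D`
on a register indexed by `R`. -/
inductive RLAct (R D : Type) : Type where
  | read (α : R) (a : D)
  | write (α : R) (a : D)

/-- Condition on register valuations `v`, `v'` for an action to fire. -/
def regCond {R D : Type} [DecidableEq R] (act : RLAct R D) (v v' : R → D) : Prop :=
  match act with
  | .read α a => v α = a ∧ v' = v
  | .write α a => v' = Function.update v α a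

/-- Concrete step: one process moves along a transition. -/
def CStep {Q R D : Type} [DecidableEq Q] [DecidableEq R]
    (Tr : Set (Q × RLAct R D × Q)) (c c' : (Q → ℕ) × (R → D)) : Prop :=
  ∃ q act q', (q, act, q') ∈ Tr ∧ 0 < c.1 q ∧
    c'.1 = (fun r => c.1 r - (if r = q then 1 else 0) + (if r = q' then 1 else 0)) ∧
    regCond act c.2 c'.2

/-- Abstract step: set-of-populated-states semantics, deserting or not. -/
def AStep {Q R D : Type} [DecidableEq R]
    (Tr : Set (Q × RLAct R D × Q)) (a a' : Set Q × (R → D)) : Prop :=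
  ∃ q act q', (q, act, q') ∈ Tr ∧ q ∈ a.1 ∧
    (a'.1 = a.1 ∪ {q'} ∨ a'.1 = (a.1 \ {q}) ∪ {q'}) ∧
    regCond act a.2 a'.2

/-- Support of a multiset of processes: the set of populated states. -/
def rlSupp {Q : Type} (μ : Q → ℕ) : Set Q := {q | 0 < μ q}

section Aux

variable {Q D : Type} [DecidableEq Q] (Tr : Set (Q × RLAct Unit D × Q))

/-- Union of populated sets along a list of abstract configurations. -/
def lUnion (l : List (Set Q × (Unit → D))) : Set Q := {q | ∃ c ∈ l, q ∈ c.1}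

lemma lUnion_cons (c : Set Q × (Unit → D)) (t : List (Set Q × (Unit → D))) :
    lUnion (c :: t) = c.1 ∪ lUnion t := by
  ext q; simp [lUnion]

/-- Simulation of a step from a larger set, landing exactly on a prescribed set. -/
lemma shrinkStep {q q' : Q} {act : RLAct Unit D} {S S' T' : Set Q} {v v' : Unit → D}
    (htr : (q, act, q') ∈ Tr) (hq : q ∈ S)
    (hset : S' = S ∪ {q'} ∨ S' = (S \ {q}) ∪ {q'})
    (hT' : S' ⊆ T') (hreg : regCond act v v') :
    AStep Tr (S ∪ T', v) (T', v') := by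
  have hq' : q' ∈ T' := hT' (by rcases hset with h | h <;> simp [h])
  refine ⟨q, act, q', htr, Or.inl hq, ?_, hreg⟩
  by_cases hqT : q ∈ T'
  · left
    have hST : S ⊆ T' := by
      intro x hx
      by_cases hxq : x = q
      · subst hxq; exact hqT
      · exact hT' (by rcases hset with h | h <;> simp [h, hx, hxq])
    show T' = (S ∪ T') ∪ {q'}
    ext x
    simp only [Set.mem_union, Set.mem_singleton_iff]
    constructor
    · exact fun h => Or.inl (Or.inr h)
    · rintro ((h | h) | rfl)
      exacts [hST h, h, hq']
  · right
    have h1 : S \ {q} ⊆ T' := by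
      rintro x ⟨hx, hxq⟩
      simp only [Set.mem_singleton_iff] at hxq
      exact hT' (by rcases hset with h | h <;> simp [h, hx, hxq])
    show T' = ((S ∪ T') \ {q}) ∪ {q'}
    ext x
    simp only [Set.mem_union, Set.mem_diff, Set.mem_singleton_iff]
    constructor
    · intro h
      exact Or.inl ⟨Or.inr h, fun hxq => hqT (hxq ▸ h)⟩
    · rintro (⟨h | h, hxq⟩ | rfl)
      exacts [h1 ⟨h, by simpa using hxq⟩, h, hq']

lemma part1_aux : ∀ (l : List (Set Q × (Unit → D))), l.Chain' (AStep Tr) →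
    ∀ (c0 a : Set Q × (Unit → D)), l.head? = some c0 → l.getLast? = some a →
    ∀ T : Set Q, c0.1 ⊆ T →
    Relation.ReflTransGen (AStep Tr) (T, c0.2) (T ∪ lUnion l, a.2) := by
  intro l
  induction l with
  | nil => intro _ c0 a hh; simp at hh
  | cons c t ih =>
    intro hchain c0 a hh hl T hT
    simp only [List.head?_cons, Option.some.injEq] at hh
    subst hh
    cases t with
    | nil =>
      simp only [List.getLast?_singleton, Option.some.injEq] at hl
      subst hl
      have hU : T ∪ lUnion [c] = T := by
        rw [lUnion_cons]
        have : lUnion ([] : List (Set Q × (Unit → D))) = ∅ := by simp [lUnion]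
        rw [this, Set.union_empty, Set.union_eq_self_of_subset_right hT]
      rw [hU]
    | cons c1 t' =>
      simp only [List.Chain', List.isChain_cons_cons] at hchain
      obtain ⟨hstep, hch⟩ := hchain
      obtain ⟨q, act, q', htr, hq, hset, hreg⟩ := hstep
      have hstep' : AStep Tr (T, c.2) (T ∪ {q'}, c1.2) :=
        ⟨q, act, q', htr, hT hq, Or.inl rfl, hreg⟩
      have hq'c1 : q' ∈ c1.1 := by rcases hset with h | h <;> simp [h]
      have hc1T : c1.1 ⊆ T ∪ {q'} := by
        intro x hx
        rcases hset with h | h <;>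
        · rw [h] at hx
          rcases hx with hx | hx
          · first
            | exact Or.inl (hT hx)
            | exact Or.inl (hT hx.1)
          · exact Or.inr hx
      have h2 := ih hch c1 a rfl (by simpa using hl) (T ∪ {q'}) hc1T
      have heq : T ∪ {q'} ∪ lUnion (c1 :: t') = T ∪ lUnion (c :: c1 :: t') := by
        have hq'U : q' ∈ lUnion (c1 :: t') := ⟨c1, List.mem_cons_self, hq'c1⟩
        rw [lUnion_cons c]
        ext x
        simp only [Set.mem_union, Set.mem_singleton_iff]
        constructor
        · rintro ((h | rfl) | h)
          exacts [Or.inl h, Or.inr (Or.inr hq'U), Or.inr (Or.inr h)]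
        · rintro (h | h | h)
          exacts [Or.inl (Or.inl h), Or.inl (Or.inl (hT h)), Or.inr h]
      rw [heq] at h2
      exact Relation.ReflTransGen.head hstep' h2

lemma part2_aux : ∀ (l : List (Set Q × (Unit → D))), l.Chain' (AStep Tr) →
    ∀ (c0 a : Set Q × (Unit → D)), l.head? = some c0 → l.getLast? = some a →
    Relation.ReflTransGen (AStep Tr) (lUnion l, c0.2) a := by
  intro l
  induction l with
  | nil => intro _ c0 a hh; simp at hh
  | cons c t ih =>
    intro hchain c0 a hh hl
    simp only [List.head?_cons, Option.some.injEq] at hh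
    subst hh
    cases t with
    | nil =>
      simp only [List.getLast?_singleton, Option.some.injEq] at hl
      subst hl
      have : lUnion [c] = c.1 := by
        rw [lUnion_cons]
        have : lUnion ([] : List (Set Q × (Unit → D))) = ∅ := by simp [lUnion]
        rw [this, Set.union_empty]
      rw [this]
    | cons c1 t' =>
      simp only [List.Chain', List.isChain_cons_cons] at hchain
      obtain ⟨hstep, hch⟩ := hchain
      obtain ⟨q, act, q', htr, hq, hset, hreg⟩ := hstep
      have hT' : c1.1 ⊆ lUnion (c1 :: t') := fun x hx => ⟨c1, List.mem_cons_self, hx⟩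
      have hstep' : AStep Tr (c.1 ∪ lUnion (c1 :: t'), c.2) (lUnion (c1 :: t'), c1.2) :=
        shrinkStep Tr htr hq hset hT' hreg
      rw [lUnion_cons]
      exact Relation.ReflTransGen.head hstep' (ih hch c1 a rfl (by simpa using hl))

end Aux

/-- Execution decomposition for uninitialized single-register protocols:
one can first cover every state `S` appearing in the execution, then finish. -/
theorem exec_decomposition {Q D : Type} [Fintype Q] [DecidableEq Q] [Fintype D]
    (Tr : Set (Q × RLAct Unit D × Q)) (Q0 : Set Q) (d0 : D)
    (huninit : ∀ q α q', (q, RLAct.read α d0, q') ∉ Tr)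
    (l : List (Set Q × (Unit → D)))
    (hchain : l.Chain' (AStep Tr))
    (a0 a : Set Q × (Unit → D))
    (hhead : l.head? = some a0)
    (hlast : l.getLast? = some a)
    (hne : a0.1.Nonempty) (hsub : a0.1 ⊆ Q0) (hinit : a0.2 = fun _ => d0) :
    Relation.ReflTransGen (AStep Tr) a0 ({q | ∃ c ∈ l, q ∈ c.1}, a.2) ∧
    Relation.ReflTransGen (AStep Tr) ({q | ∃ c ∈ l, q ∈ c.1}, a.2) a := by
  have hUdef : ({q | ∃ c ∈ l, q ∈ c.1} : Set Q) = lUnion l := rfl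
  cases l with
  | nil => simp at hhead
  | cons c t =>
    simp only [List.head?_cons, Option.some.injEq] at hhead
    subst hhead
    have hcU : c.1 ⊆ lUnion (c :: t) := fun x hx => ⟨c, List.mem_cons_self, hx⟩
    constructor
    · -- part 1
      have h1 := part1_aux Tr (c :: t) hchain c a rfl hlast c.1 (subset_refl _)
      have : c.1 ∪ lUnion (c :: t) = lUnion (c :: t) :=
        Set.union_eq_self_of_subset_left hcU
      rw [this] at h1
      rw [hUdef]
      exact h1
    · -- part 2
      rw [hUdef]
      cases t with
      | nil =>
        simp only [List.getLast?_singleton, Option.some.injEq] at hlast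
        subst hlast
        have : lUnion [c] = c.1 := by
          rw [lUnion_cons]
          have : lUnion ([] : List (Set Q × (Unit → D))) = ∅ := by simp [lUnion]
          rw [this, Set.union_empty]
        rw [this]
      | cons c1 t' =>
        simp only [List.Chain', List.isChain_cons_cons] at hchain
        obtain ⟨hstep, hch⟩ := hchain
        obtain ⟨q, act, q', htr, hq, hset, hreg⟩ := hstep
        cases act with
        | read α b =>
          obtain ⟨hv, _⟩ := hreg
          rw [hinit] at hv
          cases α
          exact absurd htr (hv ▸ huninit q () q')
        | write α b =>
          cases α
          have hupd : ∀ f : Unit → D, Function.update f () b = fun _ => b := by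
            intro f; funext u; cases u; simp
          have hc1 : c1.2 = fun _ => b := by
            have : c1.2 = Function.update c.2 () b := hreg
            rw [this, hupd]
          have hreg2 : regCond (RLAct.write () b) a.2 c1.2 := by
            show c1.2 = Function.update a.2 () b
            rw [hc1, hupd]
          have hT' : c1.1 ⊆ lUnion (c1 :: t') := fun x hx => ⟨c1, List.mem_cons_self, hx⟩
          have hstep' : AStep Tr (c.1 ∪ lUnion (c1 :: t'), a.2) (lUnion (c1 :: t'), c1.2) :=
            shrinkStep Tr htr hq hset hT' hreg2
          rw [lUnion_cons]
          exact Relation.ReflTransGen.head hstep'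
            (part2_aux Tr (c1 :: t') hch c1 a rfl (by simpa using hlast))
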